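/- Let X be a nonempty set, 𝒟 an algebra of bounded real-valued functions on X that is also a vector lattice with the Stone property, and (L,𝒟) a Lagrangian that is sup-norm-closable, i.e. for every h ∈ 𝒟 with h ≥ 0 and every sequence (f_n) ⊂ 𝒟 with L_{f_n−f_m,f_n−f_m}(h) → 0 as n,m → ∞ and ‖f_n‖_sup → 0, one has L_{f_n,f_n}(h) → 0. Then the associated energy E_L(f) := (1/2)·sup{|L_{f,f}(h)| : h ∈ 𝒟, ‖h‖_sup ≤ 1} is sup-norm-closable: for every sequence (f_n) ⊂ 𝒟 with E_L(f_n−f_m) → 0 as n,m → ∞ and ‖f_n‖_sup → 0, one has E_L(f_n) → 0. -/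
import Mathlib


open Filter Topology

/-- The supremum norm of a (bounded) real-valued function. -/
noncomputable def supNorm {X : Type*} (f : X → ℝ) : ℝ := ⨆ x, |f x|

/-- The unit contraction `T₁(t) = min(max(t,0),1)`. -/
def unitContraction (t : ℝ) : ℝ := min (max t 0) 1

/-- The energy associated with a Lagrangian:
`E_L(f) = (1/2)·sup{|L_{f,f}(h)| : h ∈ 𝒟, ‖h‖_sup ≤ 1}`. -/
noncomputable def lagEnergy {X : Type*} (𝒟 : Set (X → ℝ))
    (L : (X → ℝ) → (X → ℝ) → (X → ℝ) → ℝ) (f : X → ℝ) : ℝ :=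
  (1 / 2) * sSup ((fun h => |L f f h|) '' {h | h ∈ 𝒟 ∧ supNorm h ≤ 1})

/-- Theorem: if a Lagrangian `(L,𝒟)` is sup-norm-closable, then its associated energy
`E_L` is a sup-norm-closable bilinear form. -/
theorem statement_13 {X : Type*} [Nonempty X] (𝒟 : Set (X → ℝ))
    (L : (X → ℝ) → (X → ℝ) → (X → ℝ) → ℝ)
    (hbdd : ∀ f ∈ 𝒟, ∃ C : ℝ, ∀ x, |f x| ≤ C)
    (hadd : ∀ f ∈ 𝒟, ∀ g ∈ 𝒟, f + g ∈ 𝒟)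
    (hsmul : ∀ c : ℝ, ∀ f ∈ 𝒟, c • f ∈ 𝒟)
    (hmul : ∀ f ∈ 𝒟, ∀ g ∈ 𝒟, f * g ∈ 𝒟)
    (hmax : ∀ f ∈ 𝒟, ∀ g ∈ 𝒟, (fun x => max (f x) (g x)) ∈ 𝒟)
    (hmin : ∀ f ∈ 𝒟, ∀ g ∈ 𝒟, (fun x => min (f x) (g x)) ∈ 𝒟)
    (hstone : ∀ f ∈ 𝒟, (fun x => min (f x) 1) ∈ 𝒟)
    -- each `L_{f,g}` is a sup-norm-bounded linear functional on `𝒟`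
    (hLbdd : ∀ f ∈ 𝒟, ∀ g ∈ 𝒟, ∃ C : ℝ, ∀ h ∈ 𝒟, |L f g h| ≤ C * supNorm h)
    (hLaddh : ∀ f ∈ 𝒟, ∀ g ∈ 𝒟, ∀ h₁ ∈ 𝒟, ∀ h₂ ∈ 𝒟,
      L f g (h₁ + h₂) = L f g h₁ + L f g h₂)
    (hLsmulh : ∀ f ∈ 𝒟, ∀ g ∈ 𝒟, ∀ c : ℝ, ∀ h ∈ 𝒟, L f g (c • h) = c * L f g h)
    -- `L` is bilinear and symmetric in `(f,g)`
    (hLsym : ∀ f ∈ 𝒟, ∀ g ∈ 𝒟, ∀ h ∈ 𝒟, L f g h = L g f h)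
    (hLaddf : ∀ f₁ ∈ 𝒟, ∀ f₂ ∈ 𝒟, ∀ g ∈ 𝒟, ∀ h ∈ 𝒟,
      L (f₁ + f₂) g h = L f₁ g h + L f₂ g h)
    (hLsmulf : ∀ c : ℝ, ∀ f ∈ 𝒟, ∀ g ∈ 𝒟, ∀ h ∈ 𝒟, L (c • f) g h = c * L f g h)
    -- positivity of each `L_f = L_{f,f}`
    (hLpos : ∀ f ∈ 𝒟, ∀ h ∈ 𝒟, (∀ x, 0 ≤ h x) → 0 ≤ L f f h)
    -- the unit contraction operates on `(L,𝒟)`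
    (hLT1 : ∀ f ∈ 𝒟, unitContraction ∘ f ∈ 𝒟 ∧
      ∀ h ∈ 𝒟, (∀ x, 0 ≤ h x) →
        L (unitContraction ∘ f) (unitContraction ∘ f) h ≤ L f f h)
    -- `(L,𝒟)` is sup-norm-closable
    (hLclos : ∀ h ∈ 𝒟, (∀ x, 0 ≤ h x) → ∀ f : ℕ → X → ℝ, (∀ n, f n ∈ 𝒟) →
      (∀ ε : ℝ, 0 < ε → ∃ N, ∀ n ≥ N, ∀ m ≥ N, L (f n - f m) (f n - f m) h < ε) →
      Tendsto (fun n => supNorm (f n)) atTop (𝓝 0) →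
      Tendsto (fun n => L (f n) (f n) h) atTop (𝓝 0)) :
    ∀ f : ℕ → X → ℝ, (∀ n, f n ∈ 𝒟) →
      (∀ ε : ℝ, 0 < ε → ∃ N, ∀ n ≥ N, ∀ m ≥ N,
        lagEnergy 𝒟 L (f n - f m) < ε) →
      Tendsto (fun n => supNorm (f n)) atTop (𝓝 0) →
      Tendsto (fun n => lagEnergy 𝒟 L (f n)) atTop (𝓝 0) := by

  intro f hf hCauchy hsup
  classical
  have hD0 : (0 : X → ℝ) ∈ 𝒟 := by
    have := hsmul 0 (f 0) (hf 0); simpa using this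
  have hDneg : ∀ g ∈ 𝒟, -g ∈ 𝒟 := by
    intro g hg
    have := hsmul (-1) g hg; simpa using this
  have hDsub : ∀ g₁ ∈ 𝒟, ∀ g₂ ∈ 𝒟, g₁ - g₂ ∈ 𝒟 := by
    intro g₁ h₁ g₂ h₂
    have := hadd g₁ h₁ (-g₂) (hDneg g₂ h₂); simpa [sub_eq_add_neg] using this
  have hbdda : ∀ g ∈ 𝒟, BddAbove (Set.range fun x => |g x|) := by
    intro g hg
    obtain ⟨C, hC⟩ := hbdd g hg
    exact ⟨C, by rintro _ ⟨x, rfl⟩; exact hC x⟩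
  have hsupN_abs_le : ∀ g ∈ 𝒟, ∀ x, |g x| ≤ supNorm g := by
    intro g hg x; exact le_ciSup (hbdda g hg) x
  have hsupN_nonneg : ∀ g ∈ 𝒟, 0 ≤ supNorm g := by
    intro g hg
    obtain ⟨x⟩ := (inferInstance : Nonempty X)
    exact le_trans (abs_nonneg (g x)) (hsupN_abs_le g hg x)
  have hbddS : ∀ g ∈ 𝒟,
      BddAbove ((fun h => |L g g h|) '' {h | h ∈ 𝒟 ∧ supNorm h ≤ 1}) := by
    intro g hg
    obtain ⟨C, hC⟩ := hLbdd g hg g hg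
    refine ⟨max C 0, ?_⟩
    rintro _ ⟨h, ⟨hh, hh1⟩, rfl⟩
    calc |L g g h| ≤ C * supNorm h := hC h hh
      _ ≤ max C 0 * 1 :=
        mul_le_mul (le_max_left _ _) hh1 (hsupN_nonneg h hh) (le_max_right _ _)
      _ = max C 0 := mul_one _
  have hEnonneg : ∀ g : X → ℝ, 0 ≤ lagEnergy 𝒟 L g := by
    intro g
    have h0 : 0 ≤ sSup ((fun h => |L g g h|) '' {h | h ∈ 𝒟 ∧ supNorm h ≤ 1}) :=
      Real.sSup_nonneg (by rintro _ ⟨h, _, rfl⟩; exact abs_nonneg _)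
    have : (0:ℝ) ≤ (1/2) * sSup ((fun h => |L g g h|) '' {h | h ∈ 𝒟 ∧ supNorm h ≤ 1}) := by
      positivity
    simpa [lagEnergy] using this
  have habs_le : ∀ g ∈ 𝒟, ∀ h ∈ 𝒟, supNorm h ≤ 1 →
      |L g g h| ≤ 2 * lagEnergy 𝒟 L g := by
    intro g hg h hh hh1
    have hle : |L g g h| ≤ sSup ((fun h => |L g g h|) '' {h | h ∈ 𝒟 ∧ supNorm h ≤ 1}) :=
      le_csSup (hbddS g hg) ⟨h, ⟨hh, hh1⟩, rfl⟩
    have : 2 * lagEnergy 𝒟 L g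
        = sSup ((fun h => |L g g h|) '' {h | h ∈ 𝒟 ∧ supNorm h ≤ 1}) := by
      unfold lagEnergy; ring
    linarith [hle, this.ge, this.le]
  -- expansion of the quadratic form
  have hexpand : ∀ a ∈ 𝒟, ∀ b ∈ 𝒟, ∀ h ∈ 𝒟,
      L (a + b) (a + b) h = L a a h + 2 * L a b h + L b b h := by
    intro a ha b hb h hh
    have hab : a + b ∈ 𝒟 := hadd a ha b hb
    rw [hLaddf a ha b hb _ hab h hh,
        hLsym a ha _ hab h hh, hLsym b hb _ hab h hh,
        hLaddf a ha b hb a ha h hh, hLaddf a ha b hb b hb h hh,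
        hLsym b hb a ha h hh]
    ring
  -- Cauchy–Schwarz
  have hCS : ∀ g₁ ∈ 𝒟, ∀ g₂ ∈ 𝒟, ∀ h ∈ 𝒟, (∀ x, 0 ≤ h x) →
      L g₁ g₂ h ^ 2 ≤ L g₁ g₁ h * L g₂ g₂ h := by
    intro g₁ h₁ g₂ h₂ h hh hpos
    have key : ∀ t : ℝ,
        0 ≤ L g₂ g₂ h * (t * t) + (2 * L g₁ g₂ h) * t + L g₁ g₁ h := by
      intro t
      have hsg : t • g₂ ∈ 𝒟 := hsmul t g₂ h₂
      have hmem : g₁ + t • g₂ ∈ 𝒟 := hadd g₁ h₁ _ hsg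
      have h0 : 0 ≤ L (g₁ + t • g₂) (g₁ + t • g₂) h := hLpos _ hmem h hh hpos
      have e1 : L (g₁ + t • g₂) (g₁ + t • g₂) h
          = L g₁ g₁ h + 2 * L g₁ (t • g₂) h + L (t • g₂) (t • g₂) h :=
        hexpand g₁ h₁ _ hsg h hh
      have e2 : L g₁ (t • g₂) h = t * L g₁ g₂ h := by
        rw [hLsym g₁ h₁ _ hsg h hh, hLsmulf t g₂ h₂ g₁ h₁ h hh,
            hLsym g₂ h₂ g₁ h₁ h hh]
      have e3 : L (t • g₂) (t • g₂) h = t ^ 2 * L g₂ g₂ h := by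
        rw [hLsmulf t g₂ h₂ _ hsg h hh, hLsym g₂ h₂ _ hsg h hh,
            hLsmulf t g₂ h₂ g₂ h₂ h hh]
        ring
      rw [e1, e2, e3] at h0
      nlinarith [h0]
    have hd := discrim_le_zero key
    simp only [discrim] at hd
    nlinarith [hd]
  -- bounding the energy by bounds over nonnegative test functions
  have hE_le : ∀ g ∈ 𝒟, ∀ M : ℝ, 0 ≤ M →
      (∀ h ∈ 𝒟, (∀ x, 0 ≤ h x) → supNorm h ≤ 1 → L g g h ≤ M) →
      lagEnergy 𝒟 L g ≤ M := by
    intro g hg M hM hbound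
    have hs : sSup ((fun h => |L g g h|) '' {h | h ∈ 𝒟 ∧ supNorm h ≤ 1}) ≤ 2 * M := by
      apply Real.sSup_le
      · rintro _ ⟨h, ⟨hh, hh1⟩, rfl⟩
        set hp : X → ℝ := fun x => max (h x) 0 with hpdef
        set hn : X → ℝ := fun x => max (-h x) 0 with hndef
        have hpD : hp ∈ 𝒟 := by
          have := hmax h hh 0 hD0; simpa [hpdef] using this
        have hnD : hn ∈ 𝒟 := by
          have := hmax (-h) (hDneg h hh) 0 hD0; simpa [hndef] using this
        have hppos : ∀ x, 0 ≤ hp x := fun x => le_max_right _ _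
        have hnpos : ∀ x, 0 ≤ hn x := fun x => le_max_right _ _
        have hp1 : supNorm hp ≤ 1 := by
          apply ciSup_le
          intro x
          have : |hp x| ≤ |h x| := by
            rw [abs_of_nonneg (hppos x)]
            exact max_le (le_abs_self _) (abs_nonneg _)
          exact le_trans this (le_trans (hsupN_abs_le h hh x) hh1)
        have hn1 : supNorm hn ≤ 1 := by
          apply ciSup_le
          intro x
          have : |hn x| ≤ |h x| := by
            rw [abs_of_nonneg (hnpos x)]
            exact max_le (neg_le_abs _) (abs_nonneg _)
          exact le_trans this (le_trans (hsupN_abs_le h hh x) hh1)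
        have hdecomp : h = hp + (-1 : ℝ) • hn := by
          funext x
          simp only [hpdef, hndef, Pi.add_apply, Pi.smul_apply, smul_eq_mul,
            neg_one_mul, max_def]
          split_ifs <;> linarith
        have hsplit : L g g h = L g g hp - L g g hn := by
          rw [hdecomp, hLaddh g hg g hg hp hpD _ (hsmul (-1) hn hnD),
              hLsmulh g hg g hg (-1) hn hnD]
          ring
        have h1 : 0 ≤ L g g hp := hLpos g hg hp hpD hppos
        have h2 : 0 ≤ L g g hn := hLpos g hg hn hnD hnpos
        have h3 : L g g hp ≤ M := hbound hp hpD hppos hp1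
        have h4 : L g g hn ≤ M := hbound hn hnD hnpos hn1
        show |L g g h| ≤ 2 * M
        rw [hsplit, abs_sub_le_iff]
        constructor <;> linarith
      · linarith
    have : lagEnergy 𝒟 L g = (1/2) *
        sSup ((fun h => |L g g h|) '' {h | h ∈ 𝒟 ∧ supNorm h ≤ 1}) := rfl
    rw [this]; linarith
  -- main argument
  rw [Metric.tendsto_atTop]
  intro ε hε
  obtain ⟨N, hN⟩ := hCauchy (ε / 8) (by positivity)
  refine ⟨N, fun n hn => ?_⟩
  have key : ∀ h ∈ 𝒟, (∀ x, 0 ≤ h x) → supNorm h ≤ 1 →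
      L (f n) (f n) h ≤ ε / 4 := by
    intro h hh hpos hh1
    have hLlim : Tendsto (fun m => L (f m) (f m) h) atTop (𝓝 0) := by
      apply hLclos h hh hpos f hf ?_ hsup
      intro δ hδ
      obtain ⟨M, hM⟩ := hCauchy (δ / 2) (by positivity)
      refine ⟨M, fun p hp q hq => ?_⟩
      have h1 : |L (f p - f q) (f p - f q) h| ≤ 2 * lagEnergy 𝒟 L (f p - f q) :=
        habs_le _ (hDsub _ (hf p) _ (hf q)) h hh hh1
      have h2 := hM p hp q hq
      calc L (f p - f q) (f p - f q) h ≤ |L (f p - f q) (f p - f q) h| := le_abs_self _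
        _ ≤ 2 * lagEnergy 𝒟 L (f p - f q) := h1
        _ < δ := by linarith
    have htri : ∀ m ≥ N, Real.sqrt (L (f n) (f n) h)
        ≤ Real.sqrt (ε / 4) + Real.sqrt (L (f m) (f m) h) := by
      intro m hm
      set d : X → ℝ := f n - f m with hddef
      have hdD : d ∈ 𝒟 := hDsub _ (hf n) _ (hf m)
      have hdd : L d d h ≤ ε / 4 := by
        have h1 : |L d d h| ≤ 2 * lagEnergy 𝒟 L d := habs_le _ hdD h hh hh1
        have h2 := hN n hn m hm
        calc L d d h ≤ |L d d h| := le_abs_self _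
          _ ≤ 2 * lagEnergy 𝒟 L (f n - f m) := h1
          _ ≤ ε / 4 := by linarith
      have hdpos : 0 ≤ L d d h := hLpos d hdD h hh hpos
      have hmpos : 0 ≤ L (f m) (f m) h := hLpos _ (hf m) h hh hpos
      have hnn : f n = d + f m := by rw [hddef]; ring
      have e : L (f n) (f n) h = L d d h + 2 * L d (f m) h + L (f m) (f m) h := by
        rw [hnn]; exact hexpand d hdD _ (hf m) h hh
      have hcs : L d (f m) h ^ 2 ≤ L d d h * L (f m) (f m) h :=
        hCS d hdD _ (hf m) h hh hpos
      have hcross : L d (f m) h ≤ Real.sqrt (L d d h) * Real.sqrt (L (f m) (f m) h) := by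
        have h1 : L d (f m) h ≤ |L d (f m) h| := le_abs_self _
        have h2 : |L d (f m) h| = Real.sqrt (L d (f m) h ^ 2) := by
          rw [Real.sqrt_sq_eq_abs]
        have h3 : Real.sqrt (L d (f m) h ^ 2)
            ≤ Real.sqrt (L d d h * L (f m) (f m) h) := Real.sqrt_le_sqrt hcs
        rw [← Real.sqrt_mul hdpos]
        linarith
      have hsqle : L (f n) (f n) h
          ≤ (Real.sqrt (L d d h) + Real.sqrt (L (f m) (f m) h)) ^ 2 := by
        have s1 : Real.sqrt (L d d h) ^ 2 = L d d h := Real.sq_sqrt hdpos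
        have s2 : Real.sqrt (L (f m) (f m) h) ^ 2 = L (f m) (f m) h :=
          Real.sq_sqrt hmpos
        nlinarith [hcross, e]
      have step1 : Real.sqrt (L (f n) (f n) h)
          ≤ Real.sqrt (L d d h) + Real.sqrt (L (f m) (f m) h) := by
        have := Real.sqrt_le_sqrt hsqle
        rwa [Real.sqrt_sq (by positivity)] at this
      have step2 : Real.sqrt (L d d h) ≤ Real.sqrt (ε / 4) := Real.sqrt_le_sqrt hdd
      linarith
    have hsqrtlim : Tendsto (fun m => Real.sqrt (ε / 4) + Real.sqrt (L (f m) (f m) h))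
        atTop (𝓝 (Real.sqrt (ε / 4) + 0)) := by
      refine tendsto_const_nhds.add ?_
      have := hLlim.sqrt
      simpa using this
    have hlim_le : Real.sqrt (L (f n) (f n) h) ≤ Real.sqrt (ε / 4) + 0 :=
      ge_of_tendsto hsqrtlim (eventually_atTop.2 ⟨N, htri⟩)
    have hfinpos : 0 ≤ L (f n) (f n) h := hLpos _ (hf n) h hh hpos
    have : L (f n) (f n) h = Real.sqrt (L (f n) (f n) h) ^ 2 :=
      (Real.sq_sqrt hfinpos).symm
    rw [this]
    calc Real.sqrt (L (f n) (f n) h) ^ 2 ≤ Real.sqrt (ε / 4) ^ 2 := by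
          apply pow_le_pow_left₀ (Real.sqrt_nonneg _)
          linarith
      _ = ε / 4 := Real.sq_sqrt (by positivity)
  have hEn : lagEnergy 𝒟 L (f n) ≤ ε / 4 :=
    hE_le _ (hf n) (ε / 4) (by positivity) key
  have := hEnonneg (f n)
  rw [Real.dist_eq, abs_of_nonneg (by linarith)]
  linarith
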